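/- For each length i with 0 ≤ i ≤ n, the set of strings in ℰ of length exactly i has cardinality at most z. -/

import Mathlib

open scoped Classical

def matchProb {A : Type*} (p : ℕ → A → ℝ) : ℕ → List A → ℝ
  | _, [] => 1
  | i, a :: t => p i a * matchProb p (i + 1) t

/-- `P` is a solid factor of the weighted sequence (of length `n`, probabilities `p`,
threshold `1/z`) starting at (1-based) position `i`. -/
def SolidAt {A : Type*} (n : ℕ) (z : ℝ) (p : ℕ → A → ℝ) (i : ℕ) (P : List A) : Prop :=
  1 ≤ i ∧ i + P.length ≤ n + 1 ∧ 1 / z ≤ matchProb p i P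

/-- `P` is a right-maximal solid factor at position `i`: it is solid and no one-letter
extension is solid (this includes the case that `P` ends at position `n`). -/
def RightMaximalAt {A : Type*} (n : ℕ) (z : ℝ) (p : ℕ → A → ℝ) (i : ℕ) (P : List A) : Prop :=
  SolidAt n z p i P ∧ ∀ s : A, ¬ SolidAt n z p i (P ++ [s])

/-- The heavy-string suffix `𝐗[j..n]`, where `h j` is a heaviest letter at position `j`. -/
def heavyExt {A : Type*} (h : ℕ → A) (j n : ℕ) : List A :=
  (List.range (n + 1 - j)).map fun k => h (j + k)

/-- The set `ℰ` of extensions `F · 𝐗[j+1..n]` of all solid factors `F` of the weighted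
sequence. -/
def ExtSet {A : Type*} (n : ℕ) (z : ℝ) (p : ℕ → A → ℝ) (h : ℕ → A) : Set (List A) :=
  {S | ∃ i F, SolidAt n z p i F ∧ S = F ++ heavyExt h (i + F.length) n}

lemma matchProb_append {A : Type*} (p : ℕ → A → ℝ) (F G : List A) (i : ℕ) :
    matchProb p i (F ++ G) = matchProb p i F * matchProb p (i + F.length) G := by
  induction F generalizing i with
  | nil => simp [matchProb]
  | cons a t ih =>
      show p i a * matchProb p (i+1) (t ++ G) = p i a * matchProb p (i+1) t * matchProb p (i + (a :: t).length) G
      rw [ih, show i + (a :: t).length = i + 1 + t.length by simp; omega]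
      ring

lemma matchProb_nonneg {A : Type*} (p : ℕ → A → ℝ) (hp0 : ∀ j a, 0 ≤ p j a)
    (i : ℕ) (P : List A) : 0 ≤ matchProb p i P := by
  induction P generalizing i with
  | nil => norm_num [matchProb]
  | cons a t ih => exact mul_nonneg (hp0 _ _) (ih _)

lemma matchProb_le_one {A : Type*} [Fintype A] (p : ℕ → A → ℝ) (hp0 : ∀ j a, 0 ≤ p j a)
    (hp1 : ∀ j, ∑ a, p j a = 1) (i : ℕ) (P : List A) : matchProb p i P ≤ 1 := by
  have hple : ∀ j a, p j a ≤ 1 := by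
    intro j a
    calc p j a ≤ ∑ b, p j b := Finset.single_le_sum (fun b _ => hp0 j b) (Finset.mem_univ a)
    _ = 1 := hp1 j
  induction P generalizing i with
  | nil => norm_num [matchProb]
  | cons a t ih =>
      calc matchProb p i (a :: t) = p i a * matchProb p (i+1) t := rfl
      _ ≤ 1 * 1 := by
          exact mul_le_mul (hple _ _) (ih _) (matchProb_nonneg p hp0 _ _) zero_le_one
      _ = 1 := by ring

lemma kraft {A : Type*} [Fintype A] (p : ℕ → A → ℝ) (hp0 : ∀ j a, 0 ≤ p j a)
    (hp1 : ∀ j, ∑ a, p j a = 1) :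
    ∀ (m j : ℕ) (T : Finset (List A)), (∀ F ∈ T, F.length ≤ m) →
      (∀ F ∈ T, ∀ G ∈ T, F <+: G → F = G) →
      ∑ F ∈ T, matchProb p j F ≤ 1 := by
  intro m
  induction m with
  | zero =>
      intro j T hlen _
      have : T ⊆ {[]} := by
        intro F hF
        have := hlen F hF
        simp only [Finset.mem_singleton]
        exact List.eq_nil_of_length_eq_zero (Nat.le_zero.mp this)
      rcases Finset.subset_singleton_iff.mp this with h | h <;> simp [h, matchProb]
  | succ m ih =>
      intro j T hlen hanti
      by_cases hnil : ([] : List A) ∈ T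
      · have : T = {[]} := by
          apply Finset.eq_singleton_iff_unique_mem.mpr
          exact ⟨hnil, fun G hG => (hanti _ hnil _ hG List.nil_prefix).symm⟩
        simp [this, matchProb]
      · have hne : ∀ F ∈ T, F ≠ [] := fun F hF hF0 => hnil (hF0 ▸ hF)
        rcases T.eq_empty_or_nonempty with rfl | ⟨F0, hF0⟩
        · simp
        rcases List.exists_cons_of_ne_nil (hne F0 hF0) with ⟨b0, t0, rfl⟩
        haveI : Inhabited A := ⟨b0⟩
        have key : ∑ F ∈ T, matchProb p j F
            = ∑ a : A, ∑ F ∈ T.filter (fun F => F.headI = a), matchProb p j F := by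
          exact (Finset.sum_fiberwise_of_maps_to (fun F _ => Finset.mem_univ F.headI) _).symm
        rw [key]
        calc ∑ a : A, ∑ F ∈ T.filter (fun F => F.headI = a), matchProb p j F
            ≤ ∑ a : A, p j a * 1 := by
              apply Finset.sum_le_sum
              intro a _
              have hcons : ∀ F ∈ T.filter (fun F => F.headI = a), F = a :: F.tail := by
                intro F hF
                rw [Finset.mem_filter] at hF
                rcases List.exists_cons_of_ne_nil (hne F hF.1) with ⟨b, t, rfl⟩
                have hb : b = a := by simpa using hF.2
                simp [hb]
              have : ∑ F ∈ T.filter (fun F => F.headI = a), matchProb p j F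
                  = ∑ G ∈ (T.filter (fun F => F.headI = a)).image List.tail,
                      p j a * matchProb p (j+1) G := by
                rw [Finset.sum_image]
                · apply Finset.sum_congr rfl
                  intro F hF
                  conv_lhs => rw [hcons F hF]
                  rfl
                · intro x hx y hy hxy
                  rw [hcons x hx, hcons y hy, hxy]
              rw [this, ← Finset.mul_sum]
              apply mul_le_mul_of_nonneg_left _ (hp0 j a)
              apply ih (j+1)
              · intro G hG
                rcases Finset.mem_image.mp hG with ⟨F, hF, rfl⟩
                have h1 := hlen F (Finset.mem_filter.mp hF).1
                rcases List.exists_cons_of_ne_nil (hne F (Finset.mem_filter.mp hF).1) with ⟨b, t, rfl⟩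
                simp only [List.tail_cons, List.length_cons] at *
                omega
              · intro G1 hG1 G2 hG2 hpre
                rcases Finset.mem_image.mp hG1 with ⟨F1, hF1, rfl⟩
                rcases Finset.mem_image.mp hG2 with ⟨F2, hF2, rfl⟩
                have e1 := hcons F1 hF1
                have e2 := hcons F2 hF2
                have : F1 <+: F2 := by
                  rw [e1, e2]
                  exact List.cons_prefix_cons.mpr ⟨rfl, hpre⟩
                have := hanti F1 (Finset.mem_filter.mp hF1).1 F2 (Finset.mem_filter.mp hF2).1 this
                rw [this]
          _ = 1 := by simp [hp1 j]

lemma heavyExt_length {A : Type*} (h : ℕ → A) (j n : ℕ) :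
    (heavyExt h j n).length = n + 1 - j := by simp [heavyExt]

lemma heavyExt_drop {A : Type*} (h : ℕ → A) (m n d : ℕ) :
    (heavyExt h m n).drop d = heavyExt h (m + d) n := by
  apply List.ext_getElem
  · simp [heavyExt]; omega
  · intro k h1 h2
    simp only [heavyExt, List.getElem_drop, List.getElem_map, List.getElem_range]
    congr 1
    omega

lemma heavyExt_cons {A : Type*} (h : ℕ → A) (m n : ℕ) (hm : m ≤ n) :
    heavyExt h m n = h m :: heavyExt h (m + 1) n := by
  unfold heavyExt
  rw [show n + 1 - m = (n + 1 - (m + 1)) + 1 by omega, List.range_succ_eq_map]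
  simp only [List.map_cons, List.map_map, Nat.add_zero]
  congr 1
  apply List.map_congr_left
  intro k _
  simp [Function.comp]
  congr 1
  omega

lemma solid_prefix {A : Type*} [Fintype A] (n : ℕ) (z : ℝ) (p : ℕ → A → ℝ)
    (hp0 : ∀ j a, 0 ≤ p j a) (hp1 : ∀ j, ∑ a, p j a = 1) (j : ℕ) {F G : List A}
    (hG : SolidAt n z p j G) (hFG : F <+: G) : SolidAt n z p j F := by
  obtain ⟨t, rfl⟩ := hFG
  obtain ⟨h1, h2, h3⟩ := hG
  refine ⟨h1, by simp at h2 ⊢; omega, ?_⟩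
  rw [matchProb_append] at h3
  calc 1/z ≤ matchProb p j F * matchProb p (j + F.length) t := h3
  _ ≤ matchProb p j F * 1 :=
      mul_le_mul_of_nonneg_left (matchProb_le_one p hp0 hp1 _ _) (matchProb_nonneg p hp0 _ _)
  _ = matchProb p j F := by ring

noncomputable def solidTake {A : Type*} (n : ℕ) (z : ℝ) (p : ℕ → A → ℝ) (j : ℕ)
    (s : List A) : List A :=
  s.take (Nat.findGreatest (fun k => SolidAt n z p j (s.take k)) s.length)

/-- For each `0 ≤ i ≤ n`, there are at most `z` strings in `ℰ` of length exactly `i`. -/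
theorem stmt8 {A : Type*} [Fintype A] (n : ℕ) (z : ℝ) (hz : 1 ≤ z) (p : ℕ → A → ℝ)
    (hp0 : ∀ j a, 0 ≤ p j a) (hp1 : ∀ j, ∑ a, p j a = 1)
    (h : ℕ → A) (hh : ∀ j a, p j a ≤ p j (h j))
    (i : ℕ) (hi : i ≤ n) (S : Finset (List A))
    (hS : ∀ s ∈ S, s ∈ ExtSet n z p h ∧ s.length = i) :
    (S.card : ℝ) ≤ z := by
  classical
  have hz0 : (0:ℝ) < z := lt_of_lt_of_le one_pos hz
  set j := n + 1 - i with hjdef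
  have hji : j + i = n + 1 := by omega
  set Φ : List A → List A := solidTake n z p j with hΦ
  -- main structural facts about each element of S
  have main : ∀ s ∈ S, SolidAt n z p j (Φ s) ∧
      s = Φ s ++ heavyExt h (j + (Φ s).length) n ∧
      (∀ a, ¬ SolidAt n z p j (Φ s ++ [a])) := by
    intro s hsS
    obtain ⟨⟨i', F, hF, hse⟩, hslen⟩ := hS s hsS
    obtain ⟨h1, h2, h3⟩ := hF
    have hslen' : s.length = F.length + (n + 1 - (i' + F.length)) := by
      rw [hse]; simp [heavyExt_length]
    have hij : i' = j := by omega
    subst hij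
    set K := Nat.findGreatest (fun k => SolidAt n z p j (s.take k)) s.length with hK
    have hFle : F.length ≤ s.length := by omega
    have htakeF : s.take F.length = F := by rw [hse]; exact List.take_left
    have hQF : SolidAt n z p j (s.take F.length) := by
      rw [htakeF]; exact ⟨h1, h2, h3⟩
    have hKF : F.length ≤ K := Nat.le_findGreatest hFle hQF
    have hKle : K ≤ s.length := Nat.findGreatest_le _
    have hQK : SolidAt n z p j (s.take K) := by
      rw [hK]
      exact Nat.findGreatest_spec (P := fun k => SolidAt n z p j (s.take k)) hFle hQF
    have hΦs : Φ s = s.take K := rfl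
    have hΦlen : (Φ s).length = K := by
      rw [hΦs, List.length_take]; omega
    have hdrop : s.drop K = heavyExt h (j + K) n := by
      conv_lhs => rw [hse, show K = F.length + (K - F.length) by omega]
      rw [List.drop_length_add_append, heavyExt_drop]
      congr 1
      omega
    have hdecomp : s = Φ s ++ heavyExt h (j + (Φ s).length) n := by
      rw [hΦlen, hΦs, ← hdrop, List.take_append_drop]
    refine ⟨hΦs ▸ hQK, hdecomp, ?_⟩
    intro a ha
    obtain ⟨_, ha2, ha3⟩ := ha
    rw [List.length_append, hΦlen, List.length_singleton] at ha2
    have hKlt : K < s.length := by omega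
    have hjKn : j + K ≤ n := by omega
    -- the heavy one-letter extension is solid
    have hheavy : SolidAt n z p j (Φ s ++ [h (j + K)]) := by
      refine ⟨by omega, by simp [hΦlen]; omega, ?_⟩
      rw [matchProb_append, hΦlen] at ha3 ⊢
      calc 1/z ≤ matchProb p j (Φ s) * matchProb p (j + K) [a] := ha3
      _ ≤ matchProb p j (Φ s) * matchProb p (j + K) [h (j + K)] := by
          apply mul_le_mul_of_nonneg_left _ (matchProb_nonneg p hp0 _ _)
          simp only [matchProb, mul_one]
          exact hh _ _
    -- but it equals s.take (K+1)
    have htake1 : s.take (K + 1) = Φ s ++ [h (j + K)] := by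
      conv_lhs => rw [hdecomp, hΦlen, heavyExt_cons h _ n hjKn]
      rw [show K + 1 = (Φ s).length + 1 by omega, List.take_append]
      simp
    have hlt : Nat.findGreatest (fun k => SolidAt n z p j (s.take k)) s.length < K + 1 := by
      rw [← hK]; exact Nat.lt_succ_self K
    have hng := Nat.findGreatest_is_greatest hlt (by omega : K + 1 ≤ s.length)
    exact hng (htake1 ▸ hheavy)
  set T := S.image Φ with hT
  have hinj : Set.InjOn Φ S := by
    intro s1 h1 s2 h2 he
    have d1 := (main s1 h1).2.1
    have d2 := (main s2 h2).2.1
    rw [d1, d2, he]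
  have hcard : T.card = S.card := Finset.card_image_of_injOn hinj
  have hTlen : ∀ F ∈ T, F.length ≤ i := by
    intro F hF
    rcases Finset.mem_image.mp hF with ⟨s, hs, rfl⟩
    have h2 := (hS s hs).2
    have h3 : (Φ s).length ≤ s.length := by
      simp [hΦ, solidTake]
    omega
  have hTanti : ∀ F ∈ T, ∀ G ∈ T, F <+: G → F = G := by
    intro F hF G hG hpre
    rcases Finset.mem_image.mp hF with ⟨s1, hs1, rfl⟩
    rcases Finset.mem_image.mp hG with ⟨s2, hs2, rfl⟩
    obtain ⟨t, ht⟩ := hpre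
    cases t with
    | nil => simpa using ht
    | cons b t' =>
        exfalso
        have hsolid : SolidAt n z p j (Φ s1 ++ [b]) := by
          apply solid_prefix n z p hp0 hp1 j (main s2 hs2).1
          exact ⟨t', by rw [← ht]; simp⟩
        exact (main s1 hs1).2.2 b hsolid
  have hsum := kraft p hp0 hp1 i j T hTlen hTanti
  have hlb : ∀ F ∈ T, 1/z ≤ matchProb p j F := by
    intro F hF
    rcases Finset.mem_image.mp hF with ⟨s, hs, rfl⟩
    exact (main s hs).1.2.2
  have hlow : (T.card : ℝ) * (1/z) ≤ ∑ F ∈ T, matchProb p j F := by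
    have := Finset.card_nsmul_le_sum T (fun F => matchProb p j F) (1/z) hlb
    simpa [nsmul_eq_mul] using this
  rw [← hcard]
  have hfin : (T.card : ℝ) * (1/z) ≤ 1 := le_trans hlow hsum
  rw [mul_one_div, div_le_one hz0] at hfin
  exact hfin
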